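/- Let P be a hereditary graph class, let G be a finite graph on n vertices, and let W ⊆ V(G). Then (i) every maximal connected P set of G contains at most n maximal connected P sets of the induced subgraph G[W]; and consequently (ii) the number of maximal connected P sets of G[W] is at most n times the number of maximal connected P sets of G. -/

import Mathlib

attribute [local instance] Classical.propDecidable

/-- A *graph class*: a collection of finite simple graphs, given as a property of
simple graphs over every finite vertex type. -/
abbrev GraphClass : Type 1 :=
  ∀ (V : Type) [Fintype V], SimpleGraph V → Prop

/-- The graph class is a nonempty collection of graphs. -/
def GraphClass.NonemptyClass (P : GraphClass) : Prop :=
  ∃ (V : Type) (_ : Fintype V) (G : SimpleGraph V), P V G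

/-- The graph class is closed under isomorphism. -/
def GraphClass.IsoClosed (P : GraphClass) : Prop :=
  ∀ (V W : Type) (_ : Fintype V) (_ : Fintype W) (G : SimpleGraph V) (H : SimpleGraph W),
    _root_.Nonempty (G ≃g H) → (P V G ↔ P W H)

/-- The graph class is hereditary: it is closed under taking induced subgraphs. -/
def GraphClass.Hereditary (P : GraphClass) : Prop :=
  ∀ (V : Type) (_ : Fintype V) (G : SimpleGraph V) (S : Set V),
    P V G → P (↥S) (G.induce S)

variable {V : Type} [Fintype V]

/-- `S ⊆ V(G)` is a `P` set of `G` if the induced subgraph `G[S]` belongs to `P`. -/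
def IsPSet (P : GraphClass) (G : SimpleGraph V) (S : Set V) : Prop :=
  P (↥S) (G.induce S)

/-- `S` is a maximal `P` set of `G`: a `P` set with no proper superset that is a `P` set. -/
def IsMaxPSet (P : GraphClass) (G : SimpleGraph V) (S : Set V) : Prop :=
  IsPSet P G S ∧ ∀ T : Set V, S ⊂ T → ¬ IsPSet P G T

/-- `S` is a connected `P` set of `G`: a `P` set inducing a connected subgraph. -/
def IsConnPSet (P : GraphClass) (G : SimpleGraph V) (S : Set V) : Prop :=
  IsPSet P G S ∧ (G.induce S).Connected

/-- `S` is a maximal connected `P` set of `G`: a connected `P` set contained in no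
strictly larger connected `P` set. -/
def IsMaxConnPSet (P : GraphClass) (G : SimpleGraph V) (S : Set V) : Prop :=
  IsConnPSet P G S ∧ ∀ T : Set V, S ⊂ T → ¬ IsConnPSet P G T

/-- A forbidden set of `G` (with respect to the class `P`): an inclusion-minimal vertex
set inducing a subgraph that is not in `P`. -/
def IsForbiddenSet (P : GraphClass) (G : SimpleGraph V) (X : Set V) : Prop :=
  ¬ IsPSet P G X ∧ ∀ Y : Set V, Y ⊂ X → IsPSet P G Y

/-! ### Auxiliary material -/

/-- The induced subgraph of an induced subgraph is the induced subgraph of the subset. -/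
def subIso (G : SimpleGraph V) (S A : Set V) (h : A ⊆ S) :
    ((G.induce S).induce (Subtype.val ⁻¹' A : Set ↥S)) ≃g (G.induce A) where
  toEquiv :=
  { toFun := fun x => ⟨x.1.1, x.2⟩
    invFun := fun a => ⟨⟨a.1, h a.2⟩, a.2⟩
    left_inv := fun _ => rfl
    right_inv := fun _ => rfl }
  map_rel_iff' := Iff.rfl

/-- An induced subgraph of `G[W]` is isomorphic to the corresponding induced subgraph
of `G`. -/
noncomputable def imageIso (G : SimpleGraph V) (W : Set V) (T : Set ↥W) :
    ((G.induce W).induce T) ≃g (G.induce (Subtype.val '' T)) where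
  toEquiv := Equiv.Set.image Subtype.val T Subtype.val_injective
  map_rel_iff' := Iff.rfl

/-- Subsets of `P` sets are `P` sets (hereditary + iso-closed). -/
theorem IsPSet.subset {P : GraphClass} (hiso : P.IsoClosed) (hher : P.Hereditary)
    {G : SimpleGraph V} {S A : Set V} (hS : IsPSet P G S) (hAS : A ⊆ S) :
    IsPSet P G A := by
  have h1 : P ↥(Subtype.val ⁻¹' A : Set ↥S) ((G.induce S).induce (Subtype.val ⁻¹' A)) :=
    hher ↥S _ (G.induce S) _ hS
  exact (hiso _ _ _ _ _ _ ⟨subIso G S A hAS⟩).mp h1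

/-- Transfer of `P` sets between `G[W]` and `G`. -/
theorem isPSet_image_iff {P : GraphClass} (hiso : P.IsoClosed)
    (G : SimpleGraph V) (W : Set V) (T : Set ↥W) :
    IsPSet P (G.induce W) T ↔ IsPSet P G (Subtype.val '' T) :=
  hiso _ _ _ _ _ _ ⟨imageIso G W T⟩

theorem connected_image_iff (G : SimpleGraph V) (W : Set V) (T : Set ↥W) :
    ((G.induce W).induce T).Connected ↔ (G.induce (Subtype.val '' T)).Connected :=
  (imageIso G W T).connected_iff

/-- Every connected `P` set is contained in a maximal connected `P` set. -/
theorem exists_maxConnPSet {P : GraphClass} {G : SimpleGraph V} {A : Set V}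
    (hA : IsConnPSet P G A) : ∃ S, IsMaxConnPSet P G S ∧ A ⊆ S := by
  obtain ⟨S, hS, hmax⟩ := Set.Finite.exists_maximalFor (id : Set V → Set V)
    {B | IsConnPSet P G B ∧ A ⊆ B} (Set.toFinite _) ⟨A, hA, subset_rfl⟩
  refine ⟨S, ⟨hS.1, fun T hT hTconn => ?_⟩, hS.2⟩
  exact hT.2 (hmax ⟨hTconn, hS.2.trans hT.le⟩ hT.le)

/-- A connected `P` set is nonempty. -/
theorem IsConnPSet.nonempty {P : GraphClass} {G : SimpleGraph V} {A : Set V}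
    (hA : IsConnPSet P G A) : A.Nonempty := by
  obtain ⟨⟨a, ha⟩⟩ := hA.2.nonempty
  exact ⟨a, ha⟩

/-- Key lemma: two maximal connected `P` sets of `G[W]` that are contained in a common
`P` set of `G` and intersect must be equal. -/
theorem maxConnPSet_eq_of_inter {P : GraphClass} (hiso : P.IsoClosed) (hher : P.Hereditary)
    {G : SimpleGraph V} {W S : Set V} {T T' : Set ↥W}
    (hT : IsMaxConnPSet P (G.induce W) T) (hT' : IsMaxConnPSet P (G.induce W) T')
    (hTS : Subtype.val '' T ⊆ S) (hT'S : Subtype.val '' T' ⊆ S)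
    (hS : IsPSet P G S) (hint : (T ∩ T').Nonempty) : T = T' := by
  have hconn : ((G.induce W).induce (T ∪ T')).Connected :=
    SimpleGraph.induce_union_connected hT.1.2.preconnected hT'.1.2.preconnected hint
  have hP : IsPSet P (G.induce W) (T ∪ T') := by
    rw [isPSet_image_iff hiso]
    refine IsPSet.subset hiso hher hS ?_
    rw [Set.image_union]
    exact Set.union_subset hTS hT'S
  have hCP : IsConnPSet P (G.induce W) (T ∪ T') := ⟨hP, hconn⟩
  have h1 : T = T ∪ T' := by
    by_contra hne
    exact hT.2 (T ∪ T') (ssubset_of_subset_of_ne Set.subset_union_left hne) hCP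
  have h2 : T' = T ∪ T' := by
    by_contra hne
    exact hT'.2 (T ∪ T') (ssubset_of_subset_of_ne Set.subset_union_right hne) hCP
  exact h1.trans h2.symm

/-- Let `P` be a hereditary graph class, `G` a finite graph on `n`
vertices and `W ⊆ V(G)`.  (i) every maximal connected `P` set of `G` contains at most
`n` maximal connected `P` sets of `G[W]`, and (ii) the number of maximal connected `P`
sets of `G[W]` is at most `n` times the number of maximal connected `P` sets of `G`. -/
theorem maxConnPSets_of_induced_subgraph
    (P : GraphClass) (hne : P.NonemptyClass) (hiso : P.IsoClosed) (hher : P.Hereditary)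
    {V : Type} [Fintype V] (G : SimpleGraph V) (W : Set V) :
    (∀ S : Set V, IsMaxConnPSet P G S →
      {T : Set (↥W) | IsMaxConnPSet P (G.induce W) T ∧ Subtype.val '' T ⊆ S}.ncard ≤
        Fintype.card V) ∧
    {T : Set (↥W) | IsMaxConnPSet P (G.induce W) T}.ncard ≤
      Fintype.card V * {S : Set V | IsMaxConnPSet P G S}.ncard := by
  classical
  constructor
  · -- part (i)
    intro S hS
    rcases Set.eq_empty_or_nonempty
      {T : Set (↥W) | IsMaxConnPSet P (G.induce W) T ∧ Subtype.val '' T ⊆ S} with hF | hFne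
    · rw [hF, Set.ncard_empty]
      exact Nat.zero_le _
    · obtain ⟨T0, hT0⟩ := hFne
      obtain ⟨v0, -⟩ := hT0.1.1.nonempty
      have key : {T : Set (↥W) | IsMaxConnPSet P (G.induce W) T ∧
          Subtype.val '' T ⊆ S}.ncard ≤ (Set.univ : Set V).ncard := by
        refine Set.ncard_le_ncard_of_injOn
          (fun T => if h : T.Nonempty then (h.choose : ↥W).val else v0.val)
          (fun T _ => Set.mem_univ _) ?_ Set.finite_univ
        intro T hT T' hT' heq
        have h1 : T.Nonempty := hT.1.1.nonempty
        have h2 : T'.Nonempty := hT'.1.1.nonempty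
        simp only [dif_pos h1, dif_pos h2] at heq
        have hv : h1.choose = h2.choose := Subtype.val_injective heq
        exact maxConnPSet_eq_of_inter hiso hher hT.1 hT'.1 hT.2 hT'.2 hS.1.1
          ⟨h1.choose, h1.choose_spec, hv ▸ h2.choose_spec⟩
      simpa [Set.ncard_univ, Nat.card_eq_fintype_card] using key
  · -- part (ii)
    rcases Set.eq_empty_or_nonempty
      {T : Set (↥W) | IsMaxConnPSet P (G.induce W) T} with hF | hFne
    · rw [hF, Set.ncard_empty]
      exact Nat.zero_le _
    · obtain ⟨T0, hT0⟩ := hFne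
      obtain ⟨v0, -⟩ := hT0.1.nonempty
      have hext : ∀ T : Set ↥W, IsMaxConnPSet P (G.induce W) T →
          ∃ S, IsMaxConnPSet P G S ∧ Subtype.val '' T ⊆ S := by
        intro T hT
        exact exists_maxConnPSet ⟨(isPSet_image_iff hiso G W T).mp hT.1.1,
          (connected_image_iff G W T).mp hT.1.2⟩
      choose! Sof hSof1 hSof2 using hext
      have key : {T : Set (↥W) | IsMaxConnPSet P (G.induce W) T}.ncard ≤
          ((Set.univ : Set V) ×ˢ {S : Set V | IsMaxConnPSet P G S}).ncard := by
        refine Set.ncard_le_ncard_of_injOn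
          (fun T => ((if h : T.Nonempty then (h.choose : ↥W).val else v0.val), Sof T))
          (fun T hT => ⟨Set.mem_univ _, hSof1 T hT⟩) ?_ (Set.toFinite _)
        intro T hT T' hT' heq
        rw [Prod.mk.injEq] at heq
        obtain ⟨heq1, heq2⟩ := heq
        have h1 : T.Nonempty := hT.1.nonempty
        have h2 : T'.Nonempty := hT'.1.nonempty
        simp only [dif_pos h1, dif_pos h2] at heq1
        have hv : h1.choose = h2.choose := Subtype.val_injective heq1
        refine maxConnPSet_eq_of_inter hiso hher hT hT' (hSof2 T hT) ?_
          (hSof1 T hT).1.1 ⟨h1.choose, h1.choose_spec, hv ▸ h2.choose_spec⟩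
        rw [heq2]
        exact hSof2 T' hT'
      have hprod : ((Set.univ : Set V) ×ˢ {S : Set V | IsMaxConnPSet P G S}).ncard =
          Fintype.card V * {S : Set V | IsMaxConnPSet P G S}.ncard := by
        rw [← Nat.card_coe_set_eq,
          Nat.card_congr (Equiv.Set.prod (Set.univ : Set V) {S : Set V | IsMaxConnPSet P G S}),
          Nat.card_prod, Nat.card_coe_set_eq, Nat.card_coe_set_eq, Set.ncard_univ,
          Nat.card_eq_fintype_card]
      exact hprod ▸ key
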